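/- Let a > 0 and let k : [0, ∞) → ℝ be continuous with k(s) ≤ −a² for all s, and let F be the solution of F'' + kF = 0 with F(0) = 0, F'(0) = 1. Then F'(s) ≥ a·F(s) for all s ≥ 0, and in fact F'(s)/F(s) > a for all s > 0. -/

import Mathlib

open Set Real Filter Topology

/-- Lemma 1 (i), second part: if `k ≤ -a² < 0` then `F' ≥ a F` on `[0,∞)` and
`F'/F > a` on `(0,∞)`. -/
theorem stmt_1 (a : ℝ) (ha : 0 < a) (k F F' F'' : ℝ → ℝ)
    (hk_cont : ContinuousOn k (Set.Ici 0))
    (hk_le : ∀ s ∈ Set.Ici (0 : ℝ), k s ≤ -a ^ 2)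
    (hF' : ∀ s ∈ Set.Ici (0 : ℝ), HasDerivWithinAt F (F' s) (Set.Ici 0) s)
    (hF'' : ∀ s ∈ Set.Ici (0 : ℝ), HasDerivWithinAt F' (F'' s) (Set.Ici 0) s)
    (hF''_cont : ContinuousOn F'' (Set.Ici 0))
    (hODE : ∀ s ∈ Set.Ici (0 : ℝ), F'' s + k s * F s = 0)
    (hF0 : F 0 = 0) (hF'0 : F' 0 = 1) :
    (∀ s ∈ Set.Ici (0 : ℝ), a * F s ≤ F' s) ∧ (∀ s > (0 : ℝ), a < F' s / F s) := by
  have hFc : ContinuousOn F (Set.Ici 0) := fun x hx => (hF' x hx).continuousWithinAt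
  have hF'c : ContinuousOn F' (Set.Ici 0) := fun x hx => (hF'' x hx).continuousWithinAt
  -- Key step: F' ≥ 1 on [0, ∞)
  have key : ∀ s ∈ Set.Ici (0:ℝ), 1 ≤ F' s := by
    by_contra hcon
    push_neg at hcon
    obtain ⟨b0, hb00, hb01⟩ := hcon
    set bad : Set ℝ := {s | s ∈ Set.Ici (0:ℝ) ∧ F' s < 1} with hbaddef
    have hne : bad.Nonempty := ⟨b0, hb00, hb01⟩
    have hbdd : BddBelow bad := ⟨0, fun x hx => hx.1⟩
    set t := sInf bad with htdef
    have ht0 : 0 ≤ t := le_csInf hne fun x hx => hx.1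
    have hlt : ∀ s ∈ Set.Ico (0:ℝ) t, 1 ≤ F' s := by
      intro s hs
      by_contra hs'
      push_neg at hs'
      exact absurd (csInf_le hbdd ⟨hs.1, hs'⟩) (not_le.mpr hs.2)
    -- F' t ≥ 1
    have hFt : 1 ≤ F' t := by
      rcases eq_or_lt_of_le ht0 with h0 | h0
      · rw [← h0, hF'0]
      · have hcl : t ∈ closure (Set.Ico (0:ℝ) t) := by
          rw [closure_Ico h0.ne]
          exact ⟨ht0, le_refl t⟩
        have hnb : (𝓝[Set.Ico (0:ℝ) t] t).NeBot :=
          mem_closure_iff_nhdsWithin_neBot.mp hcl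
        have htd : Tendsto F' (𝓝[Set.Ico (0:ℝ) t] t) (𝓝 (F' t)) :=
          ((hF'c t ht0).mono Set.Ico_subset_Ici_self).tendsto
        exact ge_of_tendsto htd (eventually_mem_nhdsWithin.mono hlt)
    -- find δ where F' > 1/2 near t within Ici 0
    obtain ⟨δ, hδ, hδ'⟩ := Metric.continuousWithinAt_iff.mp (hF'c t ht0) (1/2) (by norm_num)
    set T := t + δ/2 with hTdef
    have hTt : t < T := by rw [hTdef]; linarith
    have hF'pos : ∀ s ∈ Set.Icc (0:ℝ) T, 0 < F' s := by
      intro s hs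
      rcases lt_or_ge s t with h | h
      · linarith [hlt s ⟨hs.1, h⟩]
      · rcases eq_or_lt_of_le h with h' | h'
        · rw [← h']; linarith
        · have hd : dist s t < δ := by
            rw [Real.dist_eq, abs_of_nonneg (by linarith)]
            have := hs.2
            rw [hTdef] at this
            linarith
          have h2 := hδ' hs.1 hd
          rw [Real.dist_eq] at h2
          have h3 := abs_lt.mp h2
          linarith [hFt]
    -- F strictly monotone on [0, T]
    have hintsub : interior (Set.Icc (0:ℝ) T) ⊆ Set.Ici (0:ℝ) := by
      rw [interior_Icc]; exact fun x hx => le_of_lt hx.1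
    have hFmono : StrictMonoOn F (Set.Icc 0 T) := by
      apply strictMonoOn_of_hasDerivWithinAt_pos (convex_Icc 0 T)
        (hFc.mono Set.Icc_subset_Ici_self)
        (fun x hx => (hF' x (hintsub hx)).mono hintsub)
      intro x hx
      rw [interior_Icc] at hx
      exact hF'pos x ⟨le_of_lt hx.1, le_of_lt hx.2⟩
    have hFnn : ∀ s ∈ Set.Icc (0:ℝ) T, 0 ≤ F s := by
      intro s hs
      rcases eq_or_lt_of_le hs.1 with h | h
      · rw [← h, hF0]
      · have := hFmono (Set.left_mem_Icc.mpr (by linarith)) hs h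
        rw [hF0] at this; linarith
    -- F'' ≥ 0 on [0,T]
    have hF''nn : ∀ s ∈ Set.Icc (0:ℝ) T, 0 ≤ F'' s := by
      intro s hs
      have h1 := hODE s hs.1
      have h2 := hk_le s hs.1
      have h3 := hFnn s hs
      nlinarith
    have hF'mono : MonotoneOn F' (Set.Icc 0 T) := by
      apply monotoneOn_of_hasDerivWithinAt_nonneg (convex_Icc 0 T)
        (hF'c.mono Set.Icc_subset_Ici_self)
        (fun x hx => (hF'' x (hintsub hx)).mono hintsub)
      intro x hx
      rw [interior_Icc] at hx
      exact hF''nn x ⟨le_of_lt hx.1, le_of_lt hx.2⟩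
    -- contradiction: there is a bad point below T
    obtain ⟨b, hb, hbT⟩ := exists_lt_of_csInf_lt hne (show sInf bad < T from hTt)
    have hb0 : (0:ℝ) ≤ b := hb.1
    have hb1 : 1 ≤ F' b := by
      have := hF'mono (Set.left_mem_Icc.mpr (by linarith)) ⟨hb0, le_of_lt hbT⟩ hb0
      rwa [hF'0] at this
    linarith [hb.2]
  -- consequences of the key step
  have hFmono : StrictMonoOn F (Set.Ici 0) := by
    apply strictMonoOn_of_hasDerivWithinAt_pos (convex_Ici 0) hFc
      (fun x hx => (hF' x (interior_subset hx)).mono interior_subset)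
    intro x hx
    rw [interior_Ici] at hx
    linarith [key x (Set.mem_Ici.mpr (le_of_lt hx))]
  have hFpos : ∀ s > (0:ℝ), 0 < F s := by
    intro s hs
    have := hFmono Set.self_mem_Ici (le_of_lt hs) hs
    rwa [hF0] at this
  have hFnn : ∀ s ∈ Set.Ici (0:ℝ), 0 ≤ F s := by
    intro s hs
    rcases eq_or_lt_of_le (Set.mem_Ici.mp hs) with h | h
    · rw [← h, hF0]
    · exact le_of_lt (hFpos s h)
  -- Wronskian W = F' sinh(a s) - a F cosh(a s)
  set W : ℝ → ℝ := fun s => F' s * Real.sinh (a*s) - a * F s * Real.cosh (a*s) with hWdef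
  have hW' : ∀ s ∈ Set.Ici (0:ℝ),
      HasDerivWithinAt W (Real.sinh (a*s) * ((-(k s) - a^2) * F s)) (Set.Ici 0) s := by
    intro s hs
    have haS : HasDerivWithinAt (fun x : ℝ => a * x) a (Set.Ici 0) s := by
      simpa using ((hasDerivAt_id s).const_mul a).hasDerivWithinAt
    have hsinh : HasDerivWithinAt (fun x => Real.sinh (a*x)) (Real.cosh (a*s) * a)
        (Set.Ici 0) s := haS.sinh
    have hcosh : HasDerivWithinAt (fun x => Real.cosh (a*x)) (Real.sinh (a*s) * a)
        (Set.Ici 0) s := haS.cosh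
    have h1 := (hF'' s hs).mul hsinh
    have h2 := ((hF' s hs).const_mul a).mul hcosh
    have h3 := h1.sub h2
    exact h3.congr_deriv (by linear_combination (Real.sinh (a*s)) * hODE s hs)
  have hWc : ContinuousOn W (Set.Ici 0) := fun x hx => (hW' x hx).continuousWithinAt
  have hWmono : MonotoneOn W (Set.Ici 0) := by
    apply monotoneOn_of_hasDerivWithinAt_nonneg (convex_Ici 0) hWc
      (fun x hx => (hW' x (interior_subset hx)).mono interior_subset)
    intro x hx
    rw [interior_Ici] at hx
    have h1 : 0 ≤ Real.sinh (a*x) :=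
      le_of_lt (Real.sinh_pos_iff.mpr (mul_pos ha hx))
    have h2 : 0 ≤ -(k x) - a^2 := by linarith [hk_le x (Set.mem_Ici.mpr (le_of_lt hx))]
    have h3 : 0 ≤ F x := hFnn x (Set.mem_Ici.mpr (le_of_lt hx))
    exact mul_nonneg h1 (mul_nonneg h2 h3)
  have hW0 : W 0 = 0 := by
    simp [hWdef, hF0, hF'0]
  have hWnn : ∀ s ∈ Set.Ici (0:ℝ), 0 ≤ W s := by
    intro s hs
    have := hWmono Set.self_mem_Ici hs hs
    rwa [hW0] at this
  constructor
  · intro s hs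
    rcases eq_or_lt_of_le (Set.mem_Ici.mp hs) with h | h
    · rw [← h, hF0, hF'0]; norm_num
    · have hw : 0 ≤ F' s * Real.sinh (a*s) - a * F s * Real.cosh (a*s) := hWnn s (Set.mem_Ici.mpr (le_of_lt h))
      have h1 : 0 < Real.sinh (a*s) := Real.sinh_pos_iff.mpr (mul_pos ha h)
      have h2 : Real.sinh (a*s) < Real.cosh (a*s) := Real.sinh_lt_cosh (a*s)
      have h3 : 0 ≤ a * F s := mul_nonneg (le_of_lt ha) (hFnn s (Set.mem_Ici.mpr (le_of_lt h)))
      nlinarith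
  · intro s hs
    have hFs : 0 < F s := hFpos s hs
    rw [lt_div_iff₀ hFs]
    have hw : 0 ≤ F' s * Real.sinh (a*s) - a * F s * Real.cosh (a*s) := hWnn s (Set.mem_Ici.mpr (le_of_lt hs))
    have h1 : 0 < Real.sinh (a*s) := Real.sinh_pos_iff.mpr (mul_pos ha hs)
    have h2 : Real.sinh (a*s) < Real.cosh (a*s) := Real.sinh_lt_cosh (a*s)
    have h3 : 0 < a * F s := mul_pos ha hFs
    nlinarith
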